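/- (Concatenation preserves admissibility, orthogonal case.) Let d₁ and d₂ be standard domino tableaux such that the concatenation d = d₁ + d₂ is defined (the last column of d₁ is at least as long as the first column of d₂). Suppose d₂ satisfies condition (S) (for every i and every odd ℓ, the subtableau of d₂ formed by boxes numbered ≤ i has an even number of rows of length ℓ), d₁ satisfies condition (O) (for every i and every even ℓ, the subtableau of d₁ formed by boxes numbered ≤ i has an even number of rows of length ℓ), and d₁ has an odd number of columns. Then d satisfies (O). -/
import Mathlib


/-- A standard domino tableau, encoded by its chain of subdiagrams:
`shape i r` is the length of row `r` (rows indexed from `0`) of the Young diagram formed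
by the boxes with entry `≤ i`.  Equivalently: the boxes are numbered `0, 1, …, steps`,
the box `0` occurs at most once (only when the total size is odd), each `i ≥ 1` occupies
two adjacent boxes (a horizontal or vertical domino), and the entries are nondecreasing
along rows and columns. -/
structure DominoTableau where
  /-- the largest entry, `⌊n/2⌋` for a tableau with `n` boxes -/
  steps : ℕ
  /-- `shape i r` = length of row `r` of the subtableau formed by the boxes numbered `≤ i` -/
  shape : ℕ → ℕ → ℕ
  /-- every subshape is a Young diagram: row lengths are weakly decreasing -/
  shape_antitone : ∀ i, Antitone (shape i)
  /-- the subshape of entries `≤ 0` consists of at most one box (the box numbered `0`) … -/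
  shape_zero_le : shape 0 0 ≤ 1
  /-- … located in the first row -/
  shape_zero : ∀ r, 1 ≤ r → shape 0 r = 0
  /-- the chain of subshapes is stationary after the last entry -/
  shape_stable : ∀ i, steps ≤ i → shape i = shape steps
  /-- at each step a domino (horizontal or vertical) is added -/
  domino : ∀ i < steps,
    (∃ r, shape (i + 1) r = shape i r + 2 ∧ ∀ r', r' ≠ r → shape (i + 1) r' = shape i r') ∨
    (∃ r, shape (i + 1) r = shape i r + 1 ∧ shape (i + 1) (r + 1) = shape i (r + 1) + 1 ∧
      shape (i + 1) r = shape (i + 1) (r + 1) ∧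
      ∀ r', r' ≠ r → r' ≠ r + 1 → shape (i + 1) r' = shape i r')

/-- `d.nrows i ℓ` is the number of rows of length `ℓ` in the subtableau of `d` formed by
the boxes numbered `≤ i`. -/
noncomputable def DominoTableau.nrows (d : DominoTableau) (i ℓ : ℕ) : ℕ :=
  Nat.card {r : ℕ // d.shape i r = ℓ}

/-- The number of columns of a domino tableau (= the length of its first row). -/
def DominoTableau.cols (d : DominoTableau) : ℕ :=
  d.shape d.steps 0

/-- Condition (O): for every `i` and every even length `ℓ`, the subtableau formed by the
boxes numbered `≤ i` has an even number of rows of length `ℓ`. -/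
def DominoTableau.CondO (d : DominoTableau) : Prop :=
  ∀ i ℓ, 0 < ℓ → Even ℓ → Even (d.nrows i ℓ)

/-- Condition (S): for every `i` and every odd length `ℓ`, the subtableau formed by the
boxes numbered `≤ i` has an even number of rows of length `ℓ`. -/
def DominoTableau.CondS (d : DominoTableau) : Prop :=
  ∀ i ℓ, Odd ℓ → Even (d.nrows i ℓ)

/-- `d.IsConcat d₁ d₂` says that `d` is the concatenation `d₁ + d₂`: `d₂` has even size
(no box numbered `0`), the last column of `d₁` is at least as long as the first column of
`d₂` (so that the concatenation is defined), and `d` is obtained by placing `d₂` to the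
right of `d₁` with all entries of `d₂` shifted by `⌊n₁/2⌋ = d₁.steps`. -/
def DominoTableau.IsConcat (d d₁ d₂ : DominoTableau) : Prop :=
  (∀ r, d₂.shape 0 r = 0) ∧
  Nat.card {r : ℕ // 1 ≤ d₂.shape d₂.steps r} ≤
    Nat.card {r : ℕ // d₁.shape d₁.steps r = d₁.cols} ∧
  d.steps = d₁.steps + d₂.steps ∧
  (∀ i r, d.shape i r = d₁.shape i r + d₂.shape (i - d₁.steps) r)

/-- Concatenation preserves admissibility, orthogonal case: if `d = d₁ + d₂` with `d₂`
satisfying (S), `d₁` satisfying (O), and `d₁` having an odd number of columns, then `d`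
satisfies (O). -/
lemma DT.mono (d : DominoTableau) (r : ℕ) : Monotone fun i => d.shape i r := by
  apply monotone_nat_of_le_succ
  intro i
  rcases lt_or_ge i d.steps with hi | hi
  · rcases d.domino i hi with ⟨r₀, h1, h2⟩ | ⟨r₀, h1, h2, _, h4⟩
    · by_cases hr : r = r₀
      · subst hr; omega
      · simp [h2 r hr]
    · by_cases hr : r = r₀
      · subst hr; omega
      · by_cases hr' : r = r₀ + 1
        · subst hr'; omega
        · simp [h4 r hr hr']
  · show d.shape i r ≤ d.shape (i+1) r
    rw [d.shape_stable i hi, d.shape_stable (i+1) (by omega)]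

lemma DT.bound (d : DominoTableau) (i : ℕ) : ∃ N, ∀ r, N ≤ r → d.shape i r = 0 := by
  induction i with
  | zero => exact ⟨1, fun r hr => d.shape_zero r hr⟩
  | succ i ih =>
    obtain ⟨N, hN⟩ := ih
    rcases lt_or_ge i d.steps with hi | hi
    · rcases d.domino i hi with ⟨r₀, h1, h2⟩ | ⟨r₀, h1, h2, _, h4⟩
      · exact ⟨max N (r₀+1), fun r hr => by
          rw [h2 r (by omega)]; exact hN r (by omega)⟩
      · exact ⟨max N (r₀+2), fun r hr => by
          rw [h4 r (by omega) (by omega)]; exact hN r (by omega)⟩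
    · refine ⟨N, fun r hr => ?_⟩
      rw [d.shape_stable (i+1) (by omega), ← d.shape_stable i hi]
      exact hN r hr

lemma DT.le_steps (d : DominoTableau) (i r : ℕ) : d.shape i r ≤ d.shape d.steps r := by
  rcases le_total i d.steps with h | h
  · exact DT.mono d r h
  · rw [d.shape_stable i h]

lemma DT.card_lt (m : ℕ) : Nat.card {r : ℕ // r < m} = m := by
  rw [← Nat.card_congr (Fin.equivSubtype (n := m))]
  simp

theorem stmt12 (d d₁ d₂ : DominoTableau) (h : d.IsConcat d₁ d₂)
    (hS : d₂.CondS) (hO : d₁.CondO) (hodd : Odd d₁.cols) : d.CondO := by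
  obtain ⟨h0, hcard, hsteps, hshape⟩ := h
  intro i ℓ hl hl2
  rcases le_or_gt i d₁.steps with hi | hi
  · have hj : i - d₁.steps = 0 := by omega
    have heq : ∀ r, d.shape i r = ℓ ↔ d₁.shape i r = ℓ := by
      intro r
      rw [hshape i r, hj, h0 r]
      omega
    unfold DominoTableau.nrows
    rw [Nat.card_congr (Equiv.subtypeEquivRight heq)]
    exact hO i ℓ hl hl2
  · have hstab : ∀ r, d₁.shape i r = d₁.shape d₁.steps r := by
      intro r; rw [d₁.shape_stable i (le_of_lt hi)]
    have hub : ∀ r, d₁.shape d₁.steps r ≤ d₁.cols :=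
      fun r => d₁.shape_antitone d₁.steps (Nat.zero_le r)
    have hpos : 1 ≤ d₁.cols := hodd.pos
    have hne : ℓ ≠ d₁.cols := by
      intro he
      subst he
      rw [Nat.odd_iff] at hodd
      rw [Nat.even_iff] at hl2
      omega
    obtain ⟨N₂, hN₂⟩ := DT.bound d₂ d₂.steps
    have hex₂ : ∃ r, d₂.shape d₂.steps r = 0 := ⟨N₂, hN₂ N₂ le_rfl⟩
    have hm₂0 : d₂.shape d₂.steps (Nat.find hex₂) = 0 := Nat.find_spec hex₂
    have hS₂ : ∀ r, 1 ≤ d₂.shape d₂.steps r ↔ r < Nat.find hex₂ := by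
      intro r
      constructor
      · intro hr
        by_contra hc
        push_neg at hc
        have := d₂.shape_antitone d₂.steps hc
        omega
      · intro hr
        have := Nat.find_min hex₂ hr
        omega
    obtain ⟨N₁, hN₁⟩ := DT.bound d₁ d₁.steps
    have hex₁ : ∃ r, d₁.shape d₁.steps r ≠ d₁.cols := ⟨N₁, by rw [hN₁ N₁ le_rfl]; omega⟩
    have hk₁ : ∀ r, d₁.shape d₁.steps r = d₁.cols ↔ r < Nat.find hex₁ := by
      intro r
      constructor
      · intro hr
        by_contra hc
        push_neg at hc
        have h1 := Nat.find_spec hex₁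
        have h2 := d₁.shape_antitone d₁.steps hc
        have h3 := hub (Nat.find hex₁)
        omega
      · intro hr
        have := Nat.find_min hex₁ hr
        simpa using this
    have hcard' : Nat.find hex₂ ≤ Nat.find hex₁ := by
      rwa [Nat.card_congr (Equiv.subtypeEquivRight hS₂),
        Nat.card_congr (Equiv.subtypeEquivRight hk₁), DT.card_lt, DT.card_lt] at hcard
    have key : ∀ r, 1 ≤ d₂.shape (i - d₁.steps) r → d₁.shape d₁.steps r = d₁.cols := by
      intro r hr
      have h1 : 1 ≤ d₂.shape d₂.steps r := le_trans hr (DT.le_steps d₂ _ r)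
      rw [hS₂] at h1
      rw [hk₁]
      omega
    rcases lt_or_gt_of_ne hne with hlt | hgt
    · have heq : ∀ r, d.shape i r = ℓ ↔ d₁.shape i r = ℓ := by
        intro r
        have hst := hstab r
        rw [hshape i r]
        constructor
        · intro he
          rcases Nat.eq_zero_or_pos (d₂.shape (i - d₁.steps) r) with h2 | h2
          · omega
          · have := key r h2; omega
        · intro he
          rcases Nat.eq_zero_or_pos (d₂.shape (i - d₁.steps) r) with h2 | h2
          · omega
          · have := key r h2; omega
      unfold DominoTableau.nrows
      rw [Nat.card_congr (Equiv.subtypeEquivRight heq)]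
      exact hO i ℓ hl hl2
    · have hodd' : Odd (ℓ - d₁.cols) := by
        rw [Nat.odd_iff] at hodd ⊢
        rw [Nat.even_iff] at hl2
        omega
      have heq : ∀ r, d.shape i r = ℓ ↔ d₂.shape (i - d₁.steps) r = ℓ - d₁.cols := by
        intro r
        have hst := hstab r
        have hu := hub r
        rw [hshape i r]
        constructor
        · intro he
          rcases Nat.eq_zero_or_pos (d₂.shape (i - d₁.steps) r) with h2 | h2
          · omega
          · have := key r h2; omega
        · intro he
          have h2 : 1 ≤ d₂.shape (i - d₁.steps) r := by omega
          have := key r h2; omega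
      unfold DominoTableau.nrows
      rw [Nat.card_congr (Equiv.subtypeEquivRight heq)]
      exact hS (i - d₁.steps) (ℓ - d₁.cols) hodd'
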